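/- There exists a nonnegative real sequence {a_n}_{n≥1} which is a mean value bounded variation sequence (MVBVS) but is not a non-onesided bounded variation sequence (NBVS); i.e., for every constant C > 0 there is some n ≥ 1 with ∑_{k=n}^{2n} |a_k − a_{k+1}| > C·(a_n + a_{2n}). -/

import Mathlib

open Filter

/-- A nonnegative sequence (indexed from 1) is a mean value bounded variation sequence. -/
def IsMVBVS (a : ℕ → ℝ) : Prop :=
  ∃ lam : ℝ, 2 ≤ lam ∧ ∃ C : ℝ, 0 < C ∧ ∀ n : ℕ, 1 ≤ n →
    ∑ k ∈ Finset.Icc n (2 * n), |a k - a (k + 1)| ≤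
      (C / n) * ∑ k ∈ Finset.Icc ⌊(n : ℝ) / lam⌋₊ ⌊lam * n⌋₊, a k

/-- The example sequence: `0` at powers of two, `1` elsewhere. -/
noncomputable def aSeq (k : ℕ) : ℝ := if 2 ^ Nat.log 2 k = k then 0 else 1

lemma aSeq_nonneg (k : ℕ) : 0 ≤ aSeq k := by unfold aSeq; split <;> norm_num

lemma aSeq_le_one (k : ℕ) : aSeq k ≤ 1 := by unfold aSeq; split <;> norm_num

lemma aSeq_eq_one {k : ℕ} (h : ∀ j : ℕ, k ≠ 2 ^ j) : aSeq k = 1 := by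
  unfold aSeq
  rw [if_neg]
  intro hc
  exact h _ hc.symm

lemma aSeq_pow (j : ℕ) : aSeq (2 ^ j) = 0 := by
  unfold aSeq
  rw [Nat.log_pow one_lt_two]
  simp

lemma abs_term_le_one (k : ℕ) : |aSeq k - aSeq (k + 1)| ≤ 1 := by
  have h1 := aSeq_nonneg k
  have h2 := aSeq_le_one k
  have h3 := aSeq_nonneg (k + 1)
  have h4 := aSeq_le_one (k + 1)
  rw [abs_sub_le_iff]
  constructor <;> linarith

/-- The variation of `aSeq` over `[n, 2n]` is at most `4`. -/
lemma var_le (n : ℕ) (hn : 1 ≤ n) :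
    ∑ k ∈ Finset.Icc n (2 * n), |aSeq k - aSeq (k + 1)| ≤ 4 := by
  set L := Nat.log 2 n with hLdef
  have h1 : 2 ^ L ≤ n := Nat.pow_log_le_self 2 (by omega)
  have h2 : n < 2 ^ (L + 1) := Nat.lt_pow_succ_log_self one_lt_two n
  have h2' : 2 ^ (L + 1) = 2 * 2 ^ L := by rw [pow_succ]; ring
  set s : Finset ℕ := {2 ^ L - 1, 2 ^ L, 2 ^ (L + 1) - 1, 2 ^ (L + 1)} with hs
  have hzero : ∀ k ∈ Finset.Icc n (2 * n), k ∉ s → |aSeq k - aSeq (k + 1)| = 0 := by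
    intro k hk hks
    rw [Finset.mem_Icc] at hk
    simp only [hs, Finset.mem_insert, Finset.mem_singleton] at hks
    push_neg at hks
    obtain ⟨hk1, hk2, hk3, hk4⟩ := hks
    have ha : aSeq k = 1 := by
      apply aSeq_eq_one
      intro j hj
      have hjL : L ≤ j := by
        by_contra hlt
        push_neg at hlt
        have hpow : 2 ^ j < 2 ^ L := Nat.pow_lt_pow_right one_lt_two hlt
        omega
      have hjU : j ≤ L + 1 := by
        by_contra hlt
        push_neg at hlt
        have hpow : 2 ^ (L + 2) ≤ 2 ^ j := Nat.pow_le_pow_right (by norm_num) hlt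
        have hpow2 : 2 ^ (L + 2) = 2 * 2 ^ (L + 1) := by rw [pow_succ]; ring
        omega
      rcases (by omega : j = L ∨ j = L + 1) with rfl | rfl
      · exact hk2 hj
      · exact hk4 hj
    have hb : aSeq (k + 1) = 1 := by
      apply aSeq_eq_one
      intro j hj
      have hjL : L + 1 ≤ j := by
        by_contra hlt
        push_neg at hlt
        have hpow : 2 ^ j ≤ 2 ^ L := Nat.pow_le_pow_right (by norm_num) (by omega)
        omega
      have hjU : j ≤ L + 1 := by
        by_contra hlt
        push_neg at hlt
        have hpow : 2 ^ (L + 2) ≤ 2 ^ j := Nat.pow_le_pow_right (by norm_num) hlt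
        have hpow2 : 2 ^ (L + 2) = 2 * 2 ^ (L + 1) := by rw [pow_succ]; ring
        omega
      have hjeq : j = L + 1 := by omega
      subst hjeq
      omega
    rw [ha, hb]
    simp
  have hcard : s.card ≤ 4 := by
    rw [hs]
    have h1' := Finset.card_insert_le (2 ^ L - 1)
      ({2 ^ L, 2 ^ (L + 1) - 1, 2 ^ (L + 1)} : Finset ℕ)
    have h2'' := Finset.card_insert_le (2 ^ L)
      ({2 ^ (L + 1) - 1, 2 ^ (L + 1)} : Finset ℕ)
    have h3' := Finset.card_insert_le (2 ^ (L + 1) - 1)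
      ({2 ^ (L + 1)} : Finset ℕ)
    have h4' : ({2 ^ (L + 1)} : Finset ℕ).card = 1 := Finset.card_singleton _
    omega
  calc ∑ k ∈ Finset.Icc n (2 * n), |aSeq k - aSeq (k + 1)|
      = ∑ k ∈ Finset.Icc n (2 * n) ∩ s, |aSeq k - aSeq (k + 1)| := by
        refine (Finset.sum_subset Finset.inter_subset_left ?_).symm
        intro x hx hxs
        exact hzero x hx (fun h => hxs (Finset.mem_inter.mpr ⟨hx, h⟩))
    _ ≤ ∑ k ∈ Finset.Icc n (2 * n) ∩ s, 1 :=
        Finset.sum_le_sum (fun k _ => abs_term_le_one k)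
    _ = ((Finset.Icc n (2 * n) ∩ s).card : ℝ) := by simp
    _ ≤ 4 := by
        have := le_trans (Finset.card_le_card (Finset.inter_subset_right
          (s₁ := Finset.Icc n (2 * n)) (s₂ := s))) hcard
        exact_mod_cast this

/-- Lower bound for the sum of `aSeq` over `[n/2, 2n]`. -/
lemma sum_ge (n : ℕ) (hn : 2 ≤ n) :
    ((n : ℝ) - 1) / 2 ≤ ∑ k ∈ Finset.Icc (n / 2) (2 * n), aSeq k := by
  set L := Nat.log 2 n with hLdef
  have h1 : 2 ^ L ≤ n := Nat.pow_log_le_self 2 (by omega)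
  have h2 : n < 2 ^ (L + 1) := Nat.lt_pow_succ_log_self one_lt_two n
  have h2' : 2 ^ (L + 1) = 2 * 2 ^ L := by rw [pow_succ]; ring
  have hL1 : 1 ≤ L :=
    (Nat.le_log_iff_pow_le one_lt_two (by omega : n ≠ 0)).mpr
      (show 2 ^ 1 ≤ n by simpa using hn)
  have hp2 : 2 ≤ 2 ^ L := by
    calc 2 = 2 ^ 1 := by norm_num
    _ ≤ 2 ^ L := Nat.pow_le_pow_right (by norm_num) hL1
  set p := 2 ^ L with hpdef
  have hsub : Finset.Icc (p + 1) (2 * p - 1) ⊆ Finset.Icc (n / 2) (2 * n) := by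
    intro k hk
    rw [Finset.mem_Icc] at *
    omega
  have hones : ∀ k ∈ Finset.Icc (p + 1) (2 * p - 1), aSeq k = 1 := by
    intro k hk
    rw [Finset.mem_Icc] at hk
    apply aSeq_eq_one
    intro j hj
    rcases le_or_gt j L with h | h
    · have : 2 ^ j ≤ 2 ^ L := Nat.pow_le_pow_right (by norm_num) h
      omega
    · have : 2 ^ (L + 1) ≤ 2 ^ j := Nat.pow_le_pow_right (by norm_num) h
      omega
  have hsmall : ∑ k ∈ Finset.Icc (p + 1) (2 * p - 1), aSeq k = (p : ℝ) - 1 := by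
    rw [Finset.sum_congr rfl hones, Finset.sum_const, Nat.card_Icc]
    rw [show 2 * p - 1 + 1 - (p + 1) = p - 1 by omega]
    rw [nsmul_eq_mul, mul_one, Nat.cast_sub (by omega : 1 ≤ p), Nat.cast_one]
  have hmono := Finset.sum_le_sum_of_subset_of_nonneg hsub
    (fun k _ _ => aSeq_nonneg k)
  have hcast : (n : ℝ) + 1 ≤ 2 * (p : ℝ) := by
    exact_mod_cast (by omega : n + 1 ≤ 2 * p)
  calc ((n : ℝ) - 1) / 2 ≤ (p : ℝ) - 1 := by linarith
    _ = ∑ k ∈ Finset.Icc (p + 1) (2 * p - 1), aSeq k := hsmall.symm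
    _ ≤ ∑ k ∈ Finset.Icc (n / 2) (2 * n), aSeq k := hmono

lemma aSeq0 : aSeq 0 = 1 := by
  unfold aSeq; rw [Nat.log_zero_right]; norm_num
lemma aSeq1 : aSeq 1 = 0 := by have := aSeq_pow 0; norm_num at this; exact this
lemma aSeq2 : aSeq 2 = 0 := by have := aSeq_pow 1; norm_num at this; exact this
lemma aSeq3 : aSeq 3 = 1 := by
  unfold aSeq
  rw [Nat.log_eq_of_pow_le_of_lt_pow (by norm_num) (by norm_num : (3:ℕ) < 2 ^ 2)]
  norm_num
lemma aSeq4 : aSeq 4 = 0 := by have := aSeq_pow 2; norm_num at this; exact this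
lemma aSeq5 : aSeq 5 = 1 := by
  unfold aSeq
  rw [Nat.log_eq_of_pow_le_of_lt_pow (by norm_num) (by norm_num : (5:ℕ) < 2 ^ 3)]
  norm_num
lemma aSeq6 : aSeq 6 = 1 := by
  unfold aSeq
  rw [Nat.log_eq_of_pow_le_of_lt_pow (by norm_num) (by norm_num : (6:ℕ) < 2 ^ 3)]
  norm_num
lemma aSeq7 : aSeq 7 = 1 := by
  unfold aSeq
  rw [Nat.log_eq_of_pow_le_of_lt_pow (by norm_num) (by norm_num : (7:ℕ) < 2 ^ 3)]
  norm_num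
lemma aSeq8 : aSeq 8 = 0 := by have := aSeq_pow 3; norm_num at this; exact this
lemma aSeq9 : aSeq 9 = 1 := by
  unfold aSeq
  rw [Nat.log_eq_of_pow_le_of_lt_pow (by norm_num) (by norm_num : (9:ℕ) < 2 ^ 4)]
  norm_num

/-- There is a nonnegative MVBV sequence which is not a non-onesided bounded
variation sequence: for every `C > 0` the NBV inequality fails for some `n ≥ 1`. -/
theorem stmt4 :
    ∃ a : ℕ → ℝ,
      (∀ n : ℕ, 1 ≤ n → 0 ≤ a n) ∧
      IsMVBVS a ∧
      ∀ C : ℝ, 0 < C → ∃ n : ℕ, 1 ≤ n ∧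
        C * (a n + a (2 * n)) < ∑ k ∈ Finset.Icc n (2 * n), |a k - a (k + 1)| := by
  refine ⟨aSeq, fun n _ => aSeq_nonneg n, ?_, ?_⟩
  · refine ⟨2, le_refl 2, 16, by norm_num, ?_⟩
    intro n hn
    have hfl1 : ⌊(n : ℝ) / 2⌋₊ = n / 2 := by
      rw [show ((2 : ℝ)) = ((2 : ℕ) : ℝ) by norm_num, Nat.floor_div_natCast, Nat.floor_natCast]
    have hfl2 : ⌊(2 : ℝ) * n⌋₊ = 2 * n := by
      rw [show ((2 : ℝ) * n) = ((2 * n : ℕ) : ℝ) by push_cast; ring, Nat.floor_natCast]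
    rw [hfl1, hfl2]
    rcases eq_or_lt_of_le hn with h1 | h2
    · -- n = 1
      rw [← h1]
      norm_num
      rw [show Finset.Icc 1 2 = ({1, 2} : Finset ℕ) from by decide,
        show Finset.Icc 0 2 = ({0, 1, 2} : Finset ℕ) from by decide,
        Finset.sum_insert (by decide), Finset.sum_singleton,
        Finset.sum_insert (by decide), Finset.sum_insert (by decide),
        Finset.sum_singleton]
      rw [aSeq0, aSeq1, aSeq2, aSeq3]
      norm_num
    · -- n ≥ 2
      have hv := var_le n hn
      have hs := sum_ge n h2
      have hn' : (2 : ℝ) ≤ n := by exact_mod_cast h2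
      have hnpos : (0 : ℝ) < n := by linarith
      have key : (4 : ℝ) ≤ (16 / n) * (((n : ℝ) - 1) / 2) := by
        rw [show (16 / (n:ℝ)) * (((n : ℝ) - 1) / 2) = 8 * ((n : ℝ) - 1) / n by
          field_simp; ring]
        rw [le_div_iff₀ hnpos]
        linarith
      have hmul : (16 / (n : ℝ)) * (((n : ℝ) - 1) / 2) ≤
          (16 / (n : ℝ)) * ∑ k ∈ Finset.Icc (n / 2) (2 * n), aSeq k :=
        mul_le_mul_of_nonneg_left hs (by positivity)
      linarith
  · intro C hC
    refine ⟨4, by norm_num, ?_⟩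
    rw [show (2 : ℕ) * 4 = 8 by norm_num]
    rw [show Finset.Icc 4 8 = ({4, 5, 6, 7, 8} : Finset ℕ) from by decide,
      Finset.sum_insert (by decide), Finset.sum_insert (by decide),
      Finset.sum_insert (by decide), Finset.sum_insert (by decide),
      Finset.sum_singleton]
    norm_num [aSeq4, aSeq5, aSeq6, aSeq7, aSeq8, aSeq9]
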